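/- Let K, K₀ ∈ 𝒦^{n*} and let r = d_H(K,K₀) be their Hausdorff distance. Then θ^c(K) ≤ (1+r)^{2n}·θ^c(K₀). -/

import Mathlib

open Metric Set Pointwise MeasureTheory Filter ENNReal

lemma volImgIso {n : ℕ} (g : EuclideanSpace ℝ (Fin n) ≃ᵢ EuclideanSpace ℝ (Fin n))
    (A : Set (EuclideanSpace ℝ (Fin n))) : volume (g '' A) = volume A := by
  set L := g.toRealLinearIsometryEquiv with hL
  have him : g '' A = (fun y => y + g 0) '' (⇑L '' A) := by
    rw [← Set.image_comp]
    apply Set.image_congr'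
    intro x
    simp [hL]
  have h1 : (fun y => y + g 0) '' (⇑L '' A) = (· + (-(g 0))) ⁻¹' (⇑L '' A) := by
    ext y
    simp [Set.mem_image, eq_comm, sub_eq_add_neg, eq_sub_iff_add_eq]
  have h2 : ⇑L '' A = ⇑L.symm ⁻¹' A := by
    ext y
    constructor
    · rintro ⟨x, hx, rfl⟩; simpa using hx
    · intro hy; exact ⟨L.symm y, hy, by simp⟩
  rw [him, h1,
    (measurePreserving_add_right volume (-(g 0))).measure_preimage_emb
      (measurableEmbedding_addRight _), h2,
    (L.symm.measurePreserving).measure_preimage_emb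
      (L.symm.toHomeomorph.measurableEmbedding)]

noncomputable def dilConj {E : Type*} [NormedAddCommGroup E] [NormedSpace ℝ E]
    (c : ℝ) (hc : 0 < c) (g : E ≃ᵢ E) : E ≃ᵢ E where
  toFun := fun x => c⁻¹ • g (c • x)
  invFun := fun y => c⁻¹ • g.symm (c • y)
  left_inv := fun x => by
    simp [smul_smul, mul_inv_cancel₀ hc.ne', inv_mul_cancel₀ hc.ne']
  right_inv := fun y => by
    simp [smul_smul, mul_inv_cancel₀ hc.ne', inv_mul_cancel₀ hc.ne']
  isometry_toFun := Isometry.of_dist_eq fun x y => by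
    rw [dist_smul₀, g.isometry.dist_eq, dist_smul₀]
    simp [abs_of_pos hc, abs_of_pos (inv_pos.mpr hc), ← mul_assoc,
      inv_mul_cancel₀ hc.ne']

lemma dilConj_image {E : Type*} [NormedAddCommGroup E] [NormedSpace ℝ E]
    (c : ℝ) (hc : 0 < c) (g : E ≃ᵢ E) (A : Set E) :
    (dilConj c hc g) '' A = c⁻¹ • (⇑g '' (c • A)) := by
  have h : ⇑(dilConj c hc g) = (c⁻¹ • ·) ∘ (⇑g ∘ (c • ·)) := rfl
  rw [h, Set.image_comp, Set.image_comp, Set.image_smul, Set.image_smul]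

/-- The density of the system of congruent copies `{g(K) : g ∈ S}` of `K`, for a set `S` of
isometries of `ℝⁿ`: `limsup_{R → ∞} (∑_{g ∈ S} vol(g(K) ∩ R·Bⁿ)) / vol(R·Bⁿ)`. -/
noncomputable def congrDensity (n : ℕ)
    (S : Set (EuclideanSpace ℝ (Fin n) ≃ᵢ EuclideanSpace ℝ (Fin n)))
    (K : Set (EuclideanSpace ℝ (Fin n))) : ℝ≥0∞ :=
  Filter.limsup
    (fun R : ℝ =>
      (∑' g : S, volume (((g : EuclideanSpace ℝ (Fin n) ≃ᵢ EuclideanSpace ℝ (Fin n)) '' K) ∩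
        closedBall 0 R)) / volume (closedBall (0 : EuclideanSpace ℝ (Fin n)) R))
    Filter.atTop

/-- The congruent covering density `θ^c(K)`: the infimum of the densities of countable families
of congruent copies of `K` that cover `ℝⁿ`. -/
noncomputable def thetaC (n : ℕ) (K : Set (EuclideanSpace ℝ (Fin n))) : ℝ≥0∞ :=
  ⨅ (S : Set (EuclideanSpace ℝ (Fin n) ≃ᵢ EuclideanSpace ℝ (Fin n)))
    (_ : S.Countable ∧ ⋃ g ∈ S, g '' K = Set.univ), congrDensity n S K

/-- Let `K, K₀ ∈ 𝒦^{n*}` and let `r = d_H(K, K₀)` be their Hausdorff distance.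
Then `θ^c(K) ≤ (1+r)^{2n} · θ^c(K₀)`. -/
theorem stmt_6 (n : ℕ) (hn : 1 ≤ n) (K K₀ : Set (EuclideanSpace ℝ (Fin n)))
    (hKcomp : IsCompact K) (hKconv : Convex ℝ K) (hKint : (interior K).Nonempty)
    (hK₀comp : IsCompact K₀) (hK₀conv : Convex ℝ K₀) (hK₀int : (interior K₀).Nonempty)
    (hKl : closedBall (0 : EuclideanSpace ℝ (Fin n)) 1 ⊆ K) (hKu : K ⊆ closedBall 0 n)
    (hK₀l : closedBall (0 : EuclideanSpace ℝ (Fin n)) 1 ⊆ K₀) (hK₀u : K₀ ⊆ closedBall 0 n)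
    (r : ℝ) (hr : r = hausdorffDist K K₀) :
    thetaC n K ≤ ENNReal.ofReal ((1 + r) ^ (2 * n)) * thetaC n K₀ := by
  have hr0 : 0 ≤ r := hr ▸ hausdorffDist_nonneg
  set c : ℝ := 1 + r with hc_def
  have hc1 : 1 ≤ c := by simp only [hc_def, le_add_iff_nonneg_right]; linarith
  have hc0 : 0 < c := lt_of_lt_of_le one_pos hc1
  have hKne : K.Nonempty := ⟨0, hKl (mem_closedBall_self zero_le_one)⟩
  have hK₀ne : K₀.Nonempty := ⟨0, hK₀l (mem_closedBall_self zero_le_one)⟩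
  have hfin : EMetric.hausdorffEdist K K₀ ≠ ⊤ :=
    hausdorffEdist_ne_top_of_nonempty_of_bounded hKne hK₀ne hKcomp.isBounded hK₀comp.isBounded
  -- inclusions
  have key : ∀ (A B : Set (EuclideanSpace ℝ (Fin n))), IsCompact A → A.Nonempty → Convex ℝ A →
      closedBall 0 1 ⊆ A → (∀ x ∈ B, infDist x A ≤ r) → B ⊆ c • A := by
    intro A B hAc hAne hAconv hAb hinf x hx
    obtain ⟨y, hyA, hy⟩ := hAc.exists_infDist_eq_dist hAne x
    have hxy : x - y ∈ r • A := by
      have h1 : x - y ∈ closedBall (0 : EuclideanSpace ℝ (Fin n)) r := by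
        rw [mem_closedBall_zero_iff, ← dist_eq_norm]
        exact hy ▸ hinf x hx
      have h2 : closedBall (0 : EuclideanSpace ℝ (Fin n)) r = r • closedBall 0 1 := by
        rw [_root_.smul_closedBall r (0 : EuclideanSpace ℝ (Fin n)) zero_le_one, smul_zero, Real.norm_of_nonneg hr0, mul_one]
      rw [h2] at h1
      exact Set.smul_set_mono hAb h1
    rw [hc_def, hAconv.add_smul zero_le_one hr0, one_smul]
    rw [add_comm (A) (r • A)]
    have hmem := Set.add_mem_add hxy hyA
    rwa [sub_add_cancel] at hmem
  have hsub1 : K₀ ⊆ c • K := by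
    refine key K K₀ hKcomp hKne hKconv hKl fun x hx => ?_
    rw [hr, hausdorffDist_comm]
    exact infDist_le_hausdorffDist_of_mem hx (by rwa [EMetric.hausdorffEdist_comm])
  have hsub2 : K ⊆ c • K₀ := by
    refine key K₀ K hK₀comp hK₀ne hK₀conv hK₀l fun x hx => ?_
    rw [hr]
    exact infDist_le_hausdorffDist_of_mem hx hfin
  have hsub1' : c⁻¹ • K₀ ⊆ K := by
    have h := Set.smul_set_mono (a := c⁻¹) hsub1
    rwa [inv_smul_smul₀ hc0.ne'] at h
  -- volume facts
  have hrankE : Module.finrank ℝ (EuclideanSpace ℝ (Fin n)) = n := finrank_euclideanSpace_fin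
  have hsmulvol : ∀ (t : ℝ), 0 ≤ t → ∀ (A : Set (EuclideanSpace ℝ (Fin n))),
      volume (t • A) = ENNReal.ofReal (t ^ n) * volume A := by
    intro t ht A
    rw [Measure.addHaar_smul_of_nonneg volume ht, hrankE]
  have hvolK : volume K ≤ ENNReal.ofReal (c ^ n) * volume K₀ := by
    calc volume K ≤ volume (c • K₀) := measure_mono hsub2
    _ = ENNReal.ofReal (c ^ n) * volume K₀ := hsmulvol c hc0.le K₀
  -- main reduction
  set a : ℝ≥0∞ := ENNReal.ofReal (c ^ (2 * n)) with ha_def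
  have ha0 : a ≠ 0 := by
    simp only [ha_def, ne_eq, ENNReal.ofReal_eq_zero, not_le]
    positivity
  have haT : a ≠ ⊤ := ENNReal.ofReal_ne_top
  unfold thetaC
  rw [ENNReal.mul_iInf_of_ne ha0 haT]
  refine le_iInf fun S => ?_
  rw [ENNReal.mul_iInf_of_ne ha0 haT]
  refine le_iInf fun hS => ?_
  obtain ⟨hSc, hScov⟩ := hS
  set S' := (dilConj c hc0) '' S with hS'_def
  have hS'c : S'.Countable := hSc.image _
  have hS'cov : ⋃ h ∈ S', (h : EuclideanSpace ℝ (Fin n) ≃ᵢ EuclideanSpace ℝ (Fin n)) '' K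
      = univ := by
    apply eq_univ_of_univ_subset
    calc (univ : Set (EuclideanSpace ℝ (Fin n)))
        = c⁻¹ • (univ : Set (EuclideanSpace ℝ (Fin n))) :=
          (smul_set_univ₀ (inv_ne_zero hc0.ne')).symm
    _ = c⁻¹ • ⋃ g ∈ S, (g : EuclideanSpace ℝ (Fin n) ≃ᵢ EuclideanSpace ℝ (Fin n)) '' K₀ := by
          rw [hScov]
    _ = ⋃ g ∈ S, c⁻¹ • ((g : EuclideanSpace ℝ (Fin n) ≃ᵢ EuclideanSpace ℝ (Fin n)) '' K₀) := by
          rw [Set.smul_set_iUnion₂]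
    _ ⊆ ⋃ g ∈ S, ⇑(dilConj c hc0 g) '' K := by
          refine iUnion₂_mono fun g hg => ?_
          rw [dilConj_image]
          exact Set.smul_set_mono (Set.image_mono hsub1)
    _ = ⋃ h ∈ S', (h : EuclideanSpace ℝ (Fin n) ≃ᵢ EuclideanSpace ℝ (Fin n)) '' K := by
          rw [Set.biUnion_image]
  have step1 : thetaC n K ≤ congrDensity n S' K := iInf₂_le S' ⟨hS'c, hS'cov⟩
  refine step1.trans ?_
  -- density bound
  set M : ℝ := n * (1 + c) with hM_def
  have hM0 : 0 ≤ M := by positivity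
  set G : ℝ → ℝ≥0∞ := fun ρ =>
    (∑' g : S, volume ((g : EuclideanSpace ℝ (Fin n) ≃ᵢ EuclideanSpace ℝ (Fin n)) '' K₀ ∩
      closedBall 0 ρ)) / volume (closedBall (0 : EuclideanSpace ℝ (Fin n)) ρ) with hG_def
  have hGlim : congrDensity n S K₀ = limsup G atTop := rfl
  have main : ∀ ε : ℝ, 0 < ε →
      congrDensity n S' K ≤ ENNReal.ofReal (c ^ (2 * n) * (1 + ε) ^ n) * congrDensity n S K₀ := by
    intro ε hε
    have hcε : 0 < c * ε := by positivity
    have hterm : ∀ R : ℝ, 0 < R →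
        ∀ g : EuclideanSpace ℝ (Fin n) ≃ᵢ EuclideanSpace ℝ (Fin n),
        volume (⇑(dilConj c hc0 g) '' K ∩ closedBall 0 R) ≤
          ENNReal.ofReal (c ^ n) * volume (⇑g '' K₀ ∩ closedBall 0 (c * R + M)) := by
      intro R hR g
      have hcR : (0:ℝ) ≤ c * R := by positivity
      have e1 : ⇑(dilConj c hc0 g) '' K ∩ closedBall 0 R
          = c⁻¹ • ((⇑g '' (c • K)) ∩ closedBall 0 (c * R)) := by
        rw [dilConj_image, Set.smul_set_inter₀ (inv_ne_zero hc0.ne')]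
        congr 1
        rw [_root_.smul_closedBall c⁻¹ (0 : EuclideanSpace ℝ (Fin n)) hcR, smul_zero,
          Real.norm_of_nonneg (inv_pos.mpr hc0).le]
        congr 1
        field_simp
      have e3 : volume (⇑g '' (c • K) ∩ closedBall 0 (c * R)) ≤
          ENNReal.ofReal (c ^ (2 * n)) * volume (⇑g '' K₀ ∩ closedBall 0 (c * R + M)) := by
        rcases Set.eq_empty_or_nonempty (⇑g '' (c • K) ∩ closedBall 0 (c * R)) with he | hne
        · simp [he]
        · obtain ⟨p, hp1, hp2⟩ := hne
          obtain ⟨kk, hkk, rfl⟩ := hp1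
          obtain ⟨k, hkK, rfl⟩ := hkk
          have hknorm : ‖k‖ ≤ (n : ℝ) := by
            have h7 := hKu hkK
            rwa [mem_closedBall_zero_iff] at h7
          have hsubB : ⇑g '' K₀ ⊆ closedBall 0 (c * R + M) := by
            rintro _ ⟨k₀, hk₀, rfl⟩
            have hk₀n : ‖k₀‖ ≤ (n : ℝ) := by
              have h7 := hK₀u hk₀
              rwa [mem_closedBall_zero_iff] at h7
            rw [mem_closedBall_zero_iff]
            have hgd : ‖g k₀ - g (c • k)‖ = ‖k₀ - c • k‖ := by
              rw [← dist_eq_norm, ← dist_eq_norm, g.dist_eq]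
            have h5 : ‖g (c • k)‖ ≤ c * R := by
              rwa [mem_closedBall_zero_iff] at hp2
            have h8 : c * ‖k‖ ≤ c * n := mul_le_mul_of_nonneg_left hknorm hc0.le
            calc ‖g k₀‖ = ‖(g k₀ - g (c • k)) + g (c • k)‖ := by rw [sub_add_cancel]
            _ ≤ ‖g k₀ - g (c • k)‖ + ‖g (c • k)‖ := norm_add_le _ _
            _ ≤ (‖k₀‖ + c * ‖k‖) + c * R := by
                refine add_le_add ?_ h5
                rw [hgd]
                calc ‖k₀ - c • k‖ ≤ ‖k₀‖ + ‖c • k‖ := norm_sub_le _ _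
                _ = ‖k₀‖ + c * ‖k‖ := by rw [norm_smul, Real.norm_of_nonneg hc0.le]
            _ ≤ ((n:ℝ) + c * n) + c * R := by linarith
            _ = c * R + M := by rw [hM_def]; ring
          calc volume (⇑g '' (c • K) ∩ closedBall 0 (c * R))
              ≤ volume (⇑g '' (c • K)) := measure_mono Set.inter_subset_left
          _ = volume (c • K) := volImgIso g _
          _ = ENNReal.ofReal (c ^ n) * volume K := hsmulvol c hc0.le K
          _ ≤ ENNReal.ofReal (c ^ n) * (ENNReal.ofReal (c ^ n) * volume K₀) :=
              mul_le_mul_right hvolK _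
          _ = ENNReal.ofReal (c ^ (2 * n)) * volume K₀ := by
              rw [← mul_assoc, ← ENNReal.ofReal_mul (by positivity), ← pow_add, two_mul]
          _ = ENNReal.ofReal (c ^ (2 * n)) * volume (⇑g '' K₀ ∩ closedBall 0 (c * R + M)) := by
              rw [Set.inter_eq_self_of_subset_left hsubB, volImgIso]
      calc volume (⇑(dilConj c hc0 g) '' K ∩ closedBall 0 R)
          = ENNReal.ofReal (c⁻¹ ^ n) * volume (⇑g '' (c • K) ∩ closedBall 0 (c * R)) := by
            rw [e1, hsmulvol c⁻¹ (inv_pos.mpr hc0).le]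
      _ ≤ ENNReal.ofReal (c⁻¹ ^ n) * (ENNReal.ofReal (c ^ (2 * n)) *
            volume (⇑g '' K₀ ∩ closedBall 0 (c * R + M))) := mul_le_mul_right e3 _
      _ = ENNReal.ofReal (c ^ n) * volume (⇑g '' K₀ ∩ closedBall 0 (c * R + M)) := by
            rw [← mul_assoc, ← ENNReal.ofReal_mul (by positivity)]
            congr 2
            rw [two_mul, pow_add, ← mul_assoc, inv_pow, inv_mul_cancel₀ (pow_ne_zero n hc0.ne'),
              one_mul]
    have hev : (fun R : ℝ => (∑' h : ↥S',
          volume ((h : EuclideanSpace ℝ (Fin n) ≃ᵢ EuclideanSpace ℝ (Fin n)) '' K ∩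
            closedBall 0 R)) / volume (closedBall (0 : EuclideanSpace ℝ (Fin n)) R)) ≤ᶠ[atTop]
        (fun R : ℝ => ENNReal.ofReal (c ^ (2 * n) * (1 + ε) ^ n) * G (c * R + M)) := by
      filter_upwards [eventually_ge_atTop (max 1 (M / (c * ε)))] with R hR
      have hR1 : (1:ℝ) ≤ R := le_trans (le_max_left _ _) hR
      have hR0 : (0:ℝ) < R := lt_of_lt_of_le one_pos hR1
      have hRM : M / (c * ε) ≤ R := le_trans (le_max_right _ _) hR
      have hρ0 : (0:ℝ) < c * R + M := by positivity
      have hratio : (c * R + M) / R ≤ c * (1 + ε) := by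
        rw [div_le_iff₀ hR0]
        rw [div_le_iff₀ hcε] at hRM
        nlinarith
      have hsurj : Function.Surjective (fun g : ↥S =>
          (⟨dilConj c hc0 g, Set.mem_image_of_mem _ g.2⟩ : ↥S')) := by
        rintro ⟨h, hh⟩
        obtain ⟨g, hg, rfl⟩ := hh
        exact ⟨⟨g, hg⟩, rfl⟩
      have hsum : (∑' h : ↥S',
            volume ((h : EuclideanSpace ℝ (Fin n) ≃ᵢ EuclideanSpace ℝ (Fin n)) '' K ∩
              closedBall 0 R))
          ≤ ENNReal.ofReal (c ^ n) * ∑' g : ↥S,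
            volume ((g : EuclideanSpace ℝ (Fin n) ≃ᵢ EuclideanSpace ℝ (Fin n)) '' K₀ ∩
              closedBall 0 (c * R + M)) := by
        calc (∑' h : ↥S',
              volume ((h : EuclideanSpace ℝ (Fin n) ≃ᵢ EuclideanSpace ℝ (Fin n)) '' K ∩
                closedBall 0 R))
            ≤ ∑' g : ↥S, volume (⇑(dilConj c hc0
                (g : EuclideanSpace ℝ (Fin n) ≃ᵢ EuclideanSpace ℝ (Fin n))) '' K ∩
                closedBall 0 R) :=
              ENNReal.tsum_le_tsum_comp_of_surjective hsurj _
        _ ≤ ∑' g : ↥S, ENNReal.ofReal (c ^ n) *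
              volume ((g : EuclideanSpace ℝ (Fin n) ≃ᵢ EuclideanSpace ℝ (Fin n)) '' K₀ ∩
                closedBall 0 (c * R + M)) :=
              ENNReal.tsum_le_tsum fun g => hterm R hR0 _
        _ = _ := ENNReal.tsum_mul_left
      have hVrel : volume (closedBall (0 : EuclideanSpace ℝ (Fin n)) (c * R + M))
          = ENNReal.ofReal (((c * R + M) / R) ^ n) *
            volume (closedBall (0 : EuclideanSpace ℝ (Fin n)) R) := by
        have hb : closedBall (0 : EuclideanSpace ℝ (Fin n)) (c * R + M)
            = ((c * R + M) / R) • closedBall (0 : EuclideanSpace ℝ (Fin n)) R := by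
          rw [_root_.smul_closedBall _ (0 : EuclideanSpace ℝ (Fin n)) hR0.le, smul_zero,
            Real.norm_of_nonneg (by positivity), div_mul_cancel₀ _ hR0.ne']
        rw [hb, hsmulvol _ (by positivity)]
      have hone : ENNReal.ofReal (((c * R + M) / R) ^ n) ≠ 0 := by
        simp only [ne_eq, ENNReal.ofReal_eq_zero, not_le]
        positivity
      have hVρnt : volume (closedBall (0 : EuclideanSpace ℝ (Fin n)) (c * R + M)) ≠ ⊤ :=
        measure_closedBall_lt_top.ne
      have hinv : (volume (closedBall (0 : EuclideanSpace ℝ (Fin n)) R))⁻¹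
          = ENNReal.ofReal (((c * R + M) / R) ^ n) *
            (volume (closedBall (0 : EuclideanSpace ℝ (Fin n)) (c * R + M)))⁻¹ := by
        rw [hVrel, ENNReal.mul_inv (Or.inl hone) (Or.inl ENNReal.ofReal_ne_top), ← mul_assoc,
          ENNReal.mul_inv_cancel hone ENNReal.ofReal_ne_top, one_mul]
      simp only [div_eq_mul_inv, hG_def]
      calc (∑' h : ↥S',
            volume ((h : EuclideanSpace ℝ (Fin n) ≃ᵢ EuclideanSpace ℝ (Fin n)) '' K ∩
              closedBall 0 R)) * (volume (closedBall (0 : EuclideanSpace ℝ (Fin n)) R))⁻¹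
          ≤ (ENNReal.ofReal (c ^ n) * ∑' g : ↥S,
              volume ((g : EuclideanSpace ℝ (Fin n) ≃ᵢ EuclideanSpace ℝ (Fin n)) '' K₀ ∩
                closedBall 0 (c * R + M))) *
            (ENNReal.ofReal (((c * R + M) / R) ^ n) *
              (volume (closedBall (0 : EuclideanSpace ℝ (Fin n)) (c * R + M)))⁻¹) :=
            mul_le_mul' hsum (le_of_eq hinv)
      _ = (ENNReal.ofReal (((c * R + M) / R) ^ n) * ENNReal.ofReal (c ^ n)) *
            ((∑' g : ↥S,
              volume ((g : EuclideanSpace ℝ (Fin n) ≃ᵢ EuclideanSpace ℝ (Fin n)) '' K₀ ∩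
                closedBall 0 (c * R + M))) *
              (volume (closedBall (0 : EuclideanSpace ℝ (Fin n)) (c * R + M)))⁻¹) := by
            ring
      _ ≤ (ENNReal.ofReal ((c * (1 + ε)) ^ n) * ENNReal.ofReal (c ^ n)) *
            ((∑' g : ↥S,
              volume ((g : EuclideanSpace ℝ (Fin n) ≃ᵢ EuclideanSpace ℝ (Fin n)) '' K₀ ∩
                closedBall 0 (c * R + M))) *
              (volume (closedBall (0 : EuclideanSpace ℝ (Fin n)) (c * R + M)))⁻¹) := by
            gcongr

      _ = ENNReal.ofReal (c ^ (2 * n) * (1 + ε) ^ n) *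
            ((∑' g : ↥S,
              volume ((g : EuclideanSpace ℝ (Fin n) ≃ᵢ EuclideanSpace ℝ (Fin n)) '' K₀ ∩
                closedBall 0 (c * R + M))) *
              (volume (closedBall (0 : EuclideanSpace ℝ (Fin n)) (c * R + M)))⁻¹) := by
            rw [← ENNReal.ofReal_mul (by positivity)]
            congr 2
            rw [mul_pow, two_mul, pow_add]
            ring
    have hφ : Tendsto (fun R : ℝ => c * R + M) atTop atTop :=
      tendsto_atTop_add_const_right _ M (tendsto_id.const_mul_atTop hc0)
    calc congrDensity n S' K
        ≤ limsup (fun R : ℝ => ENNReal.ofReal (c ^ (2 * n) * (1 + ε) ^ n) * G (c * R + M))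
          atTop := limsup_le_limsup hev
    _ = ENNReal.ofReal (c ^ (2 * n) * (1 + ε) ^ n) *
          limsup (fun R : ℝ => G (c * R + M)) atTop :=
        limsup_const_mul_of_ne_top ENNReal.ofReal_ne_top
    _ ≤ ENNReal.ofReal (c ^ (2 * n) * (1 + ε) ^ n) * congrDensity n S K₀ := by
        refine mul_le_mul_right ?_ _
        rw [hGlim]
        have hcomp : limsup (fun R : ℝ => G (c * R + M)) atTop
            = limsup G (map (fun R : ℝ => c * R + M) atTop) :=
          Filter.limsup_comp G _ _
        rw [hcomp]
        exact limsup_le_limsup_of_le hφ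
  -- ε → 0 limit
  by_cases hD : congrDensity n S K₀ = ⊤
  · rw [hD, ENNReal.mul_top ha0]
    exact le_top
  · have h3 : Tendsto (fun ε : ℝ => c ^ (2 * n) * (1 + ε) ^ n) (nhdsWithin 0 (Ioi 0))
        (nhds (c ^ (2 * n))) := by
      have hcont : Continuous fun ε : ℝ => c ^ (2 * n) * (1 + ε) ^ n :=
        continuous_const.mul ((continuous_const.add continuous_id).pow n)
      have h4 : Tendsto (fun ε : ℝ => c ^ (2 * n) * (1 + ε) ^ n) (nhdsWithin 0 (Ioi 0))
          (nhds (c ^ (2 * n) * (1 + 0) ^ n)) :=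
        ((hcont.tendsto 0).mono_left (nhdsWithin_le_nhds (s := Ioi 0)))
      simpa using h4
    have h2 : Tendsto (fun ε : ℝ => ENNReal.ofReal (c ^ (2 * n) * (1 + ε) ^ n) *
        congrDensity n S K₀) (nhdsWithin 0 (Ioi 0)) (nhds (a * congrDensity n S K₀)) :=
      ENNReal.Tendsto.mul_const (ENNReal.tendsto_ofReal h3) (Or.inr hD)
    exact ge_of_tendsto h2 (eventually_nhdsWithin_of_forall fun ε hε => main ε hε)
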